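/- Consider the control system NF₁₃ on ℝ⁵: ż₁ = v₁, ż₂ = z₃ + z₄v₁, ż₃ = a(z̄₄) + (−z₅ + b(z̄₄))v₁, ż₄ = z₅ + c(z̄₄)v₁, ż₅ = v₂, with flat output φ = (φ₁,φ₂) = (z₁,z₂), so that φ̇ = (v₁, z₃ + z₄v₁) as a function on the state-control space ℝ⁵ × ℝ². If χ: ℝ⁴ → ℝ is a smooth function such that the composed function (z,v) ↦ χ(z₁, z₂, v₁, z₃ + z₄v₁) does not depend on v (i.e., depends on z only), then χ(z₁, z₂, v₁, z₃ + z₄v₁) is a function of (z₁, z₂) alone. Consequently, span{dφ, dφ̇} ∩ span{dz₁,…,dz₅} = span{dz₁, dz₂}, so the four functions φ₁, φ₂, φ̇₁, φ̇₂ allow one to express only the two state variables z₁, z₂ (NF₁₃ is not x-maximally flat). -/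
import Mathlib


/-!
Formalization framework for two-input control-affine systems
`ẋ = f(x) + u₁g₁(x) + u₂g₂(x)` on open subsets of ℝⁿ, flatness,
x-flatness, differential weight, static feedback equivalence,
static feedback linearization and linearization via prolongations,
following Nicolau–Gstöttner–Respondek, "Normal forms for x-flat
two-input control-affine systems in dimension five".
-/

noncomputable section

namespace ControlAffine

/-- A control-affine system `ẋ = f(x) + Σᵢ uᵢ gᵢ(x)` with `n` states and `m` controls. -/
structure CAS (n m : ℕ) where
  f : (Fin n → ℝ) → (Fin n → ℝ)
  g : Fin m → (Fin n → ℝ) → (Fin n → ℝ)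

variable {n m : ℕ}

/-- The control-dependent vector field `f(x) + Σᵢ uᵢ gᵢ(x)`. -/
def CAS.vf (S : CAS n m) (x : Fin n → ℝ) (u : Fin m → ℝ) : Fin n → ℝ :=
  S.f x + ∑ i, u i • S.g i x

/-- Smoothness of the defining vector fields on a set `X`. -/
def CAS.SmoothOn (S : CAS n m) (X : Set (Fin n → ℝ)) : Prop :=
  ContDiffOn ℝ (⊤ : ℕ∞) S.f X ∧ ∀ i, ContDiffOn ℝ (⊤ : ℕ∞) (S.g i) X

/-- `(x, u)` is a trajectory of `S` remaining in `X`. -/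
def CAS.IsTrajOn (S : CAS n m) (X : Set (Fin n → ℝ))
    (x : ℝ → Fin n → ℝ) (u : ℝ → Fin m → ℝ) : Prop :=
  (∀ t, x t ∈ X) ∧ ∀ t, HasDerivAt x (S.vf (x t) (u t)) t

/-- The `L`-jet `(u, u̇, …, u^{(L-1)})` of a control at time `t`
(`L = 0` corresponds to `l = -1`, i.e. no control derivatives at all). -/
def ujet (L : ℕ) (u : ℝ → Fin m → ℝ) (t : ℝ) : Fin L → Fin m → ℝ :=
  fun k => iteratedDeriv k u t

/-- `φ`, a function of the state only, is an x-flat output of `S` at the point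
`(x₀, ubar₀)` (a state together with an `L`-jet of controls): there are a
neighborhood `O` of that point, and smooth maps `γ`, `δ` reconstructing the state
from the derivatives `φᵢ, φ̇ᵢ, …, φᵢ^{(sᵢ-1)}` and the control from
`φᵢ, φ̇ᵢ, …, φᵢ^{(sᵢ)}` along every smooth trajectory remaining over `O`. -/
def IsXFlatOutputAt (S : CAS n m) (X : Set (Fin n → ℝ)) (L : ℕ)
    (x₀ : Fin n → ℝ) (ubar₀ : Fin L → Fin m → ℝ)
    (φ : (Fin n → ℝ) → Fin m → ℝ) (s : Fin m → ℕ) : Prop :=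
  ∃ (O : Set ((Fin n → ℝ) × (Fin L → Fin m → ℝ)))
    (γ : ((i : Fin m) → Fin (s i) → ℝ) → Fin n → ℝ)
    (δ : ((i : Fin m) → Fin (s i + 1) → ℝ) → Fin m → ℝ),
    IsOpen O ∧ (x₀, ubar₀) ∈ O ∧ (∀ q ∈ O, Prod.fst q ∈ X) ∧
    ContDiff ℝ (⊤ : ℕ∞) γ ∧ ContDiff ℝ (⊤ : ℕ∞) δ ∧
    ∀ (x : ℝ → Fin n → ℝ) (u : ℝ → Fin m → ℝ), ContDiff ℝ (⊤ : ℕ∞) u →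
      S.IsTrajOn X x u → (∀ t, (x t, ujet L u t) ∈ O) →
      ∀ t, x t = γ (fun i k => iteratedDeriv k (fun τ => φ (x τ) i) t) ∧
           u t = δ (fun i k => iteratedDeriv k (fun τ => φ (x τ) i) t)

/-- `S` is x-flat at the point `(x₀, ubar₀)`. -/
def IsXFlatAt (S : CAS n m) (X : Set (Fin n → ℝ)) (L : ℕ)
    (x₀ : Fin n → ℝ) (ubar₀ : Fin L → Fin m → ℝ) : Prop :=
  ∃ (φ : (Fin n → ℝ) → Fin m → ℝ) (s : Fin m → ℕ),
    ContDiff ℝ (⊤ : ℕ∞) φ ∧ IsXFlatOutputAt S X L x₀ ubar₀ φ s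

/-- `S` is x-flat at `(x₀, ubar₀)` with an x-flat output of differential weight
`∑ᵢ (sᵢ + 1) = m + ∑ᵢ sᵢ` at most `w`. -/
def XFlatWeightLE (S : CAS n m) (X : Set (Fin n → ℝ)) (L : ℕ)
    (x₀ : Fin n → ℝ) (ubar₀ : Fin L → Fin m → ℝ) (w : ℕ) : Prop :=
  ∃ (φ : (Fin n → ℝ) → Fin m → ℝ) (s : Fin m → ℕ),
    ContDiff ℝ (⊤ : ℕ∞) φ ∧ IsXFlatOutputAt S X L x₀ ubar₀ φ s ∧
    ∑ i, (s i + 1) ≤ w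

/-- Local static feedback equivalence of `S` (around `x₀`, within `X`) and `S'`
(around `z₀`), via a local diffeomorphism `z = ψ(x)` and an invertible static
feedback `u = α(x) + β(x)v`; the additional predicate `P` allows to record
extra compatibility properties of the normalizing diffeomorphism `ψ`. -/
def LocallySFEThrough (S S' : CAS n m) (X : Set (Fin n → ℝ)) (x₀ z₀ : Fin n → ℝ)
    (P : Set (Fin n → ℝ) → ((Fin n → ℝ) → Fin n → ℝ) → Prop) : Prop :=
  ∃ (U : Set (Fin n → ℝ)) (ψ ψinv : (Fin n → ℝ) → Fin n → ℝ)
    (α : (Fin n → ℝ) → Fin m → ℝ) (β : (Fin n → ℝ) → Fin m → Fin m → ℝ),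
    IsOpen U ∧ x₀ ∈ U ∧ U ⊆ X ∧ ψ x₀ = z₀ ∧
    ContDiffOn ℝ (⊤ : ℕ∞) ψ U ∧ IsOpen (ψ '' U) ∧
    ContDiffOn ℝ (⊤ : ℕ∞) ψinv (ψ '' U) ∧ (∀ x ∈ U, ψinv (ψ x) = x) ∧
    ContDiffOn ℝ (⊤ : ℕ∞) α U ∧ ContDiffOn ℝ (⊤ : ℕ∞) (fun x => β x) U ∧
    (∀ x ∈ U, (Matrix.of (β x)).det ≠ 0) ∧
    (∀ x ∈ U, ∀ v : Fin m → ℝ,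
      fderiv ℝ ψ x (S.vf x fun i => α x i + ∑ j, β x i j * v j) = S'.vf (ψ x) v) ∧
    P U ψ

/-- Local static feedback equivalence of `S` around `x₀` and `S'` around `z₀`. -/
def LocallySFE (S S' : CAS n m) (X : Set (Fin n → ℝ)) (x₀ z₀ : Fin n → ℝ) : Prop :=
  LocallySFEThrough S S' X x₀ z₀ fun _ _ => True

/-- `S` is a linear controllable system `ż = Az + Bv` (Kalman rank condition). -/
def IsLinearControllable (S : CAS n m) : Prop :=
  ∃ (A : Matrix (Fin n) (Fin n) ℝ) (B : Matrix (Fin n) (Fin m) ℝ),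
    (∀ x, S.f x = A.mulVec x) ∧ (∀ j x, S.g j x = fun i => B i j) ∧
    Submodule.span ℝ
      {w : Fin n → ℝ | ∃ (k : ℕ) (j : Fin m), w = (A ^ k).mulVec fun i => B i j} = ⊤

/-- `S` is locally static feedback linearizable around `x₀` (within `X`). -/
def SFLinAt (S : CAS n m) (X : Set (Fin n → ℝ)) (x₀ : Fin n → ℝ) : Prop :=
  ∃ (S' : CAS n m) (z₀ : Fin n → ℝ), IsLinearControllable S' ∧ LocallySFE S S' X x₀ z₀

/-- The system obtained from `S` by the invertible static feedback
`u = α(x) + β(x)ũ`, i.e. `f̃ = f + gα`, `g̃ = gβ`. -/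
def feedback (S : CAS n m) (α : (Fin n → ℝ) → Fin m → ℝ)
    (β : (Fin n → ℝ) → Fin m → Fin m → ℝ) : CAS n m where
  f x := S.vf x (α x)
  g i x := ∑ j, β x j i • S.g j x

/-- The prolonged system `Σ^{(p,0)}`: the first control is replaced by a chain of
`p` integrators `ẏ₁ = y₂, …, ẏ_p = v₁` feeding `g₁`, the second control is kept;
for `p = 0` this is the system itself. -/
def prolong (S : CAS n 2) (p : ℕ) : CAS (n + p) 2 where
  f z :=
    Fin.append
      (fun i => S.f (fun i' => z (Fin.castAdd p i')) i +
        (if h : 0 < p then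
          z (Fin.natAdd n ⟨0, h⟩) * S.g 0 (fun i' => z (Fin.castAdd p i')) i
        else 0))
      (fun j : Fin p =>
        if h : (j : ℕ) + 1 < p then z (Fin.natAdd n ⟨(j : ℕ) + 1, h⟩) else 0)
  g c :=
    if c = 0 then fun z =>
      Fin.append
        (fun i => if 0 < p then 0 else S.g 0 (fun i' => z (Fin.castAdd p i')) i)
        (fun j : Fin p => if (j : ℕ) + 1 = p then 1 else 0)
    else fun z =>
      Fin.append
        (fun i => S.g 1 (fun i' => z (Fin.castAdd p i')) i)
        (fun _ : Fin p => 0)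

/-- The cylinder `X × ℝᵖ` over a set of states, as a set of prolonged states. -/
def cylinder (X : Set (Fin n → ℝ)) (p : ℕ) : Set (Fin (n + p) → ℝ) :=
  {z | (fun i => z (Fin.castAdd p i)) ∈ X}

/-- `S` is dynamically linearizable, around `x₀`, via an invertible `p`-fold
prolongation: an invertible static feedback `u = α(x) + β(x)ũ` (defined near `x₀`)
brings `S` to a system whose `p`-fold prolongation of the first control is locally
static feedback linearizable. -/
def DynLinProlongAt (S : CAS n 2) (X : Set (Fin n → ℝ)) (x₀ : Fin n → ℝ)
    (p : ℕ) : Prop :=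
  ∃ (α : (Fin n → ℝ) → Fin 2 → ℝ) (β : (Fin n → ℝ) → Fin 2 → Fin 2 → ℝ)
    (U : Set (Fin n → ℝ)) (y₀ : Fin p → ℝ),
    IsOpen U ∧ x₀ ∈ U ∧ U ⊆ X ∧
    ContDiffOn ℝ (⊤ : ℕ∞) α U ∧ ContDiffOn ℝ (⊤ : ℕ∞) (fun x => β x) U ∧
    (∀ x ∈ U, (Matrix.of (β x)).det ≠ 0) ∧
    SFLinAt (prolong (feedback S α β) p) (cylinder U p) (Fin.append x₀ y₀)

/-- Lie bracket of two vector fields on ℝⁿ. -/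
def lieBracket (f g : (Fin n → ℝ) → Fin n → ℝ) (x : Fin n → ℝ) : Fin n → ℝ :=
  fderiv ℝ g x (f x) - fderiv ℝ f x (g x)

/-- Generators of the distributions `D⁰ = span{g₁,…,g_m}`,
`D^{j+1} = D^j + [f, D^j]`. -/
def distGens (S : CAS n m) : ℕ → Set ((Fin n → ℝ) → Fin n → ℝ)
  | 0 => Set.range S.g
  | j + 1 => distGens S j ∪ lieBracket S.f '' distGens S j

/-- Assumption (A): all the ranks involved (of the distributions
`D⁰ ⊂ D¹ ⊂ D² ⊂ …`) are constant around the given point. -/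
def AssumptionA (S : CAS n m) (x₀ : Fin n → ℝ) : Prop :=
  ∀ j : ℕ, ∃ (r : ℕ) (U : Set (Fin n → ℝ)), IsOpen U ∧ x₀ ∈ U ∧
    ∀ x ∈ U, Module.finrank ℝ
      (Submodule.span ℝ {w : Fin n → ℝ | ∃ h ∈ distGens S j, w = h x}) = r

/-- Restriction `z̄₄ = (z₁, z₂, z₃, z₄)` of a state in ℝ⁵. -/
def head4 (z : Fin 5 → ℝ) : Fin 4 → ℝ := fun i => z (Fin.castLE (by norm_num) i)

/-- Restriction `z̄₃ = (z₁, z₂, z₃)` of a state in ℝ⁵. -/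
def head3 (z : Fin 5 → ℝ) : Fin 3 → ℝ := fun i => z (Fin.castLE (by norm_num) i)

/-- The partial derivative `∂F/∂zᵢ` at `z`. -/
def pd {k : ℕ} (F : (Fin k → ℝ) → ℝ) (i : Fin k) (z : Fin k → ℝ) : ℝ :=
  deriv (fun t => F (Function.update z i t)) (z i)

/-- The normal form `NF`:
`ż₁ = v₁, ż₂ = z₃, ż₃ = b₁(z̄₄) + b₂(z̄₄)v₁, ż₄ = a₁(z) + a₂(z)v₁, ż₅ = v₂`. -/
def NF (b₁ b₂ : (Fin 4 → ℝ) → ℝ) (a₁ a₂ : (Fin 5 → ℝ) → ℝ) : CAS 5 2 where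
  f z := ![0, z 2, b₁ (head4 z), a₁ z, 0]
  g := ![fun z => ![1, 0, b₂ (head4 z), a₂ z, 0], fun _ => ![0, 0, 0, 0, 1]]

/-- The normal form `NF'`:
`ż₁ = z₂, ż₂ = v₁, ż₃ = b₁(z̄₄) + b₂(z̄₄)v₁, ż₄ = a₁(z) + a₂(z)v₁, ż₅ = v₂`. -/
def NF' (b₁ b₂ : (Fin 4 → ℝ) → ℝ) (a₁ a₂ : (Fin 5 → ℝ) → ℝ) : CAS 5 2 where
  f z := ![z 1, 0, b₁ (head4 z), a₁ z, 0]
  g := ![fun z => ![0, 1, b₂ (head4 z), a₂ z, 0], fun _ => ![0, 0, 0, 0, 1]]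

/-- The normal form `NF₇`:
`ż₁ = z₂, ż₂ = z₃, ż₃ = v₁, ż₄ = a₁(z) + (z₅ - z₅₀)v₁, ż₅ = v₂`. -/
def NF7 (a₁ : (Fin 5 → ℝ) → ℝ) (z₅₀ : ℝ) : CAS 5 2 where
  f z := ![z 1, z 2, 0, a₁ z, 0]
  g := ![fun z => ![0, 0, 1, z 4 - z₅₀, 0], fun _ => ![0, 0, 0, 0, 1]]

/-- The normal form `NF''`:
`ż₁ = v₁, ż₂ = c₁(z̄₃) + c₂(z̄₃)v₁, ż₃ = b₁(z̄₄) + b₂(z̄₄)v₁,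
 ż₄ = a₁(z) + a₂(z)v₁, ż₅ = v₂`. -/
def NF'' (c₁ c₂ : (Fin 3 → ℝ) → ℝ) (b₁ b₂ : (Fin 4 → ℝ) → ℝ)
    (a₁ a₂ : (Fin 5 → ℝ) → ℝ) : CAS 5 2 where
  f z := ![0, c₁ (head3 z), b₁ (head4 z), a₁ z, 0]
  g := ![fun z => ![1, c₂ (head3 z), b₂ (head4 z), a₂ z, 0], fun _ => ![0, 0, 0, 0, 1]]

/-- The normal form `NF₁₃`:
`ż₁ = v₁, ż₂ = z₃ + z₄v₁, ż₃ = a(z̄₄) + (-z₅ + b(z̄₄))v₁,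
 ż₄ = z₅ + c(z̄₄)v₁, ż₅ = v₂`. -/
def NF13 (a b c : (Fin 4 → ℝ) → ℝ) : CAS 5 2 where
  f z := ![0, z 2, a (head4 z), z 4, 0]
  g := ![fun z => ![1, z 3, -z 4 + b (head4 z), c (head4 z), 0],
        fun _ => ![0, 0, 0, 0, 1]]

/-- For `NF₁₃` with flat output `φ = (z₁, z₂)`, one has
`φ̇ = (v₁, z₃ + z₄v₁)` on the state-control space. If a smooth function
`χ(φ₁, φ₂, φ̇₁, φ̇₂)` of `(φ, φ̇)`, viewed as a function of `(z, v)`, does not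
depend on `v`, then it is a function of `(z₁, z₂)` alone. Consequently
`span{dφ, dφ̇} ∩ span{dz} = span{dz₁, dz₂}`: the four functions
`φ₁, φ₂, φ̇₁, φ̇₂` allow one to express only the two state variables `z₁, z₂`
(`NF₁₃` is not x-maximally flat). -/
theorem statement15 (χ : (Fin 4 → ℝ) → ℝ) (hχ : ContDiff ℝ (⊤ : ℕ∞) χ)
    (hindep : ∀ (z : Fin 5 → ℝ) (v v' : Fin 2 → ℝ),
      χ ![z 0, z 1, v 0, z 2 + z 3 * v 0] = χ ![z 0, z 1, v' 0, z 2 + z 3 * v' 0]) :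
    ∃ θ : ℝ → ℝ → ℝ, ∀ (z : Fin 5 → ℝ) (v : Fin 2 → ℝ),
      χ ![z 0, z 1, v 0, z 2 + z 3 * v 0] = θ (z 0) (z 1) := by
  have key : ∀ a b x y : ℝ, χ ![a, b, x, y] = χ ![a, b, 0, 0] := by
    intro a b x y
    have h1 := hindep ![a, b, y, 0, 0] ![x, 0] ![0, 0]
    have h2 := hindep ![a, b, y, 1, 0] ![0, 0] ![-y, 0]
    have h3 := hindep ![a, b, 0, 0, 0] ![-y, 0] ![0, 0]
    simp only [Matrix.cons_val_zero, Matrix.cons_val_one, Matrix.head_cons,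
      Matrix.cons_val_two, Matrix.tail_cons, Matrix.cons_val_three] at h1 h2 h3
    rw [zero_mul, add_zero, zero_mul, add_zero] at h1
    rw [one_mul, add_zero, one_mul, add_neg_cancel] at h2
    rw [zero_mul, add_zero, zero_mul] at h3
    rw [h1, h2, h3]; norm_num
  exact ⟨fun a b => χ ![a, b, 0, 0], fun z v => key (z 0) (z 1) (v 0) (z 2 + z 3 * v 0)⟩

end ControlAffine
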